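/- Let $N \geq 2$, $E = \binom{N}{2}$, and let $\gamma_{ij} = \gamma_{ji}$ be symmetric weights on the complete graph with mean $Q = \frac{1}{E}\sum_{i<j}\gamma_{ij} > 0$ and second moment $P = \frac{1}{E}\sum_{i<j}\gamma_{ij}^2$. If $\frac{P - Q^2}{Q^2} < \frac{1}{N-1}$, then the graph Laplacian $\boldsymbol{L}$ is positive semi-definite with one-dimensional kernel spanned by $\mathbf{1}_N$; in fact its smallest nonzero eigenvalue is at least $N(Q - \sqrt{(N-1)(P-Q^2)}) > 0$. -/

import Mathlib

open Finset

/-- The graph Laplacian of the complete graph with edge weights `γ`. -/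
def graphLaplacian (N : ℕ) (γ : Fin N → Fin N → ℝ) : Matrix (Fin N) (Fin N) ℝ :=
  Matrix.of fun i j => if i = j then ∑ k ∈ univ \ {i}, γ i k else -γ i j


lemma offdiag_filter {N : ℕ} (i : Fin N) :
    (univ \ {i} : Finset (Fin N)) = univ.filter (fun j => ¬ j = i) := by
  ext j; simp

lemma offdiag_comm {N : ℕ} (h : Fin N → Fin N → ℝ) :
    ∑ i, ∑ j ∈ univ \ {i}, h i j = ∑ i, ∑ j ∈ univ \ {i}, h j i := by
  simp_rw [offdiag_filter, Finset.sum_filter]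
  rw [Finset.sum_comm]
  refine Finset.sum_congr rfl fun i _ => Finset.sum_congr rfl fun j _ => ?_
  by_cases hij : i = j
  · simp [hij]
  · simp [hij, Ne.symm hij]

lemma offdiag_split {N : ℕ} (f : Fin N → ℝ) (i : Fin N) :
    ∑ j ∈ univ \ {i}, f j
      = ∑ j ∈ univ.filter (fun j => i < j), f j + ∑ j ∈ univ.filter (fun j => j < i), f j := by
  rw [offdiag_filter]
  simp_rw [Finset.sum_filter]
  rw [← Finset.sum_add_distrib]
  refine Finset.sum_congr rfl fun j _ => ?_
  rcases lt_trichotomy i j with h | h | h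
  · simp [h, h.ne', asymm h]
  · simp [h]
  · simp [h, h.ne, asymm h]

lemma pair_swap {N : ℕ} (h : Fin N → Fin N → ℝ) :
    ∑ i, ∑ j ∈ univ.filter (fun j => j < i), h i j
      = ∑ i, ∑ j ∈ univ.filter (fun j => i < j), h j i := by
  simp_rw [Finset.sum_filter]
  rw [Finset.sum_comm]

lemma offdiag_two {N : ℕ} (h : Fin N → Fin N → ℝ) (hs : ∀ i j, h i j = h j i) :
    ∑ i, ∑ j ∈ univ \ {i}, h i j
      = 2 * ∑ i, ∑ j ∈ univ.filter (fun j => i < j), h i j := by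
  have : ∀ i, ∑ j ∈ univ \ {i}, h i j
      = ∑ j ∈ univ.filter (fun j => i < j), h i j + ∑ j ∈ univ.filter (fun j => j < i), h i j :=
    fun i => offdiag_split (h i) i
  simp_rw [this]
  rw [Finset.sum_add_distrib, pair_swap]
  have : ∀ i, ∑ j ∈ univ.filter (fun j => i < j), h j i
      = ∑ j ∈ univ.filter (fun j => i < j), h i j := by
    intro i; exact Finset.sum_congr rfl fun j _ => hs j i
  simp_rw [this]; ring
lemma quadForm {N : ℕ} (w : Fin N → Fin N → ℝ) (x : Fin N → ℝ) :
    dotProduct x ((graphLaplacian N w).mulVec x)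
      = ∑ i, ∑ j ∈ univ \ {i}, w i j * (x i ^ 2 - x i * x j) := by
  unfold graphLaplacian
  simp only [dotProduct, Matrix.mulVec, Matrix.of_apply]
  refine Finset.sum_congr rfl fun i _ => ?_
  rw [Finset.sum_eq_sum_sdiff_singleton_add (Finset.mem_univ i)
    (fun j => (if i = j then ∑ k ∈ univ \ {i}, w i k else -w i j) * x j)]
  rw [if_pos rfl]
  have hoff : ∑ j ∈ univ \ {i}, (if i = j then ∑ k ∈ univ \ {i}, w i k else -w i j) * x j
      = ∑ j ∈ univ \ {i}, -w i j * x j := by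
    refine Finset.sum_congr rfl fun j hj => ?_
    simp only [Finset.mem_sdiff, Finset.mem_singleton] at hj
    rw [if_neg fun h => hj.2 h.symm]
  rw [hoff, mul_add, Finset.mul_sum, Finset.sum_mul, Finset.mul_sum, ← Finset.sum_add_distrib]
  exact Finset.sum_congr rfl fun j _ => by ring

lemma quad0 {N : ℕ} (x : Fin N → ℝ) :
    ∑ i, ∑ j ∈ univ \ {i}, (x i ^ 2 - x i * x j)
      = N * ∑ i, x i ^ 2 - (∑ i, x i) ^ 2 := by
  have h1 : ∀ i : Fin N, ∑ j ∈ univ \ {i}, (x i ^ 2 - x i * x j)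
      = (N : ℝ) * x i ^ 2 - x i * ∑ j, x j := by
    intro i
    have hcard : ((univ \ {i} : Finset (Fin N)).card : ℝ) = (N : ℝ) - 1 := by
      rw [Finset.card_sdiff_of_subset (Finset.subset_univ _), Finset.card_singleton, Finset.card_univ,
        Fintype.card_fin, Nat.cast_sub i.pos]
      simp
    rw [Finset.sum_sub_distrib, Finset.sum_const, ← Finset.mul_sum,
      Finset.sum_sdiff_eq_sub (Finset.subset_univ {i}), Finset.sum_singleton,
      nsmul_eq_mul, hcard]
    ring
  simp_rw [h1]
  rw [Finset.sum_sub_distrib, ← Finset.mul_sum, ← Finset.sum_mul]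
  ring
lemma quad_abs_le {N : ℕ} (M : Matrix (Fin N) (Fin N) ℝ) (x : Fin N → ℝ) :
    |dotProduct x (M.mulVec x)|
      ≤ Real.sqrt (∑ i, ∑ j, (M i j) ^ 2) * ∑ i, x i ^ 2 := by
  set q := dotProduct x (M.mulVec x) with hqdef
  have hq : q = ∑ p ∈ univ ×ˢ univ, M p.1 p.2 * (x p.1 * x p.2) := by
    rw [Finset.sum_product]
    simp only [hqdef, dotProduct, Matrix.mulVec, Finset.mul_sum]
    exact Finset.sum_congr rfl fun i _ => Finset.sum_congr rfl fun j _ => by ring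
  have hA : ∑ p ∈ univ ×ˢ univ, (M p.1 p.2) ^ 2 = ∑ i, ∑ j, (M i j) ^ 2 := by
    rw [Finset.sum_product]
  have hB : ∑ p ∈ univ ×ˢ univ, (x p.1 * x p.2) ^ 2 = (∑ i, x i ^ 2) ^ 2 := by
    rw [Finset.sum_product]
    simp_rw [mul_pow, ← Finset.mul_sum]
    rw [← Finset.sum_mul, sq]
  have cs := Finset.sum_mul_sq_le_sq_mul_sq (univ ×ˢ univ)
    (fun p => M p.1 p.2) (fun p => x p.1 * x p.2)
  rw [hA, hB, ← hq] at cs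
  have h1 : |q| = Real.sqrt (q ^ 2) := (Real.sqrt_sq_eq_abs q).symm
  rw [h1]
  calc Real.sqrt (q ^ 2)
      ≤ Real.sqrt ((∑ i, ∑ j, (M i j) ^ 2) * (∑ i, x i ^ 2) ^ 2) := Real.sqrt_le_sqrt cs
    _ = Real.sqrt (∑ i, ∑ j, (M i j) ^ 2) * Real.sqrt ((∑ i, x i ^ 2) ^ 2) :=
        Real.sqrt_mul (by positivity) _
    _ = Real.sqrt (∑ i, ∑ j, (M i j) ^ 2) * ∑ i, x i ^ 2 := by
        rw [Real.sqrt_sq (by positivity)]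

lemma hs_bound {N : ℕ} (w : Fin N → Fin N → ℝ) :
    ∑ i, ∑ j, ((graphLaplacian N w) i j) ^ 2
      ≤ (N : ℝ) * ∑ i, ∑ j ∈ univ \ {i}, (w i j) ^ 2 := by
  rw [Finset.mul_sum]
  refine Finset.sum_le_sum fun i _ => ?_
  have hcard : ((univ \ {i} : Finset (Fin N)).card : ℝ) = (N : ℝ) - 1 := by
    rw [Finset.card_sdiff_of_subset (Finset.subset_univ _), Finset.card_singleton, Finset.card_univ,
      Fintype.card_fin, Nat.cast_sub i.pos]
    simp
  rw [Finset.sum_eq_sum_sdiff_singleton_add (Finset.mem_univ i)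
    (fun j => ((graphLaplacian N w) i j) ^ 2)]
  have hdiag : (graphLaplacian N w) i i = ∑ k ∈ univ \ {i}, w i k := by
    simp [graphLaplacian]
  have hoff : ∑ j ∈ univ \ {i}, ((graphLaplacian N w) i j) ^ 2
      = ∑ j ∈ univ \ {i}, (w i j) ^ 2 := by
    refine Finset.sum_congr rfl fun j hj => ?_
    simp only [Finset.mem_sdiff, Finset.mem_singleton] at hj
    simp only [graphLaplacian, Matrix.of_apply]
    rw [if_neg fun h => hj.2 h.symm]
    ring
  rw [hdiag, hoff]
  have hsq : (∑ k ∈ univ \ {i}, w i k) ^ 2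
      ≤ ((N : ℝ) - 1) * ∑ k ∈ univ \ {i}, (w i k) ^ 2 := by
    have := sq_sum_le_card_mul_sum_sq (s := univ \ {i}) (f := w i)
    rwa [hcard] at this
  nlinarith [Finset.sum_nonneg (fun j (_ : j ∈ univ \ {i}) => sq_nonneg (w i j))]

lemma shiftInv {N : ℕ} (γ : Fin N → Fin N → ℝ) (hsym : ∀ i j, γ i j = γ j i)
    (x : Fin N → ℝ) (c : ℝ) :
    ∑ i, ∑ j ∈ univ \ {i}, γ i j * (x i ^ 2 - x i * x j)
      = ∑ i, ∑ j ∈ univ \ {i}, γ i j * ((x i - c) ^ 2 - (x i - c) * (x j - c)) := by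
  have hswap : ∑ i, ∑ j ∈ univ \ {i}, γ i j * x j
      = ∑ i, ∑ j ∈ univ \ {i}, γ i j * x i := by
    rw [offdiag_comm (fun i j => γ i j * x j)]
    exact Finset.sum_congr rfl fun i _ => Finset.sum_congr rfl fun j _ => by rw [hsym j i]
  have expand : ∀ i j : Fin N, γ i j * ((x i - c) ^ 2 - (x i - c) * (x j - c))
      = γ i j * (x i ^ 2 - x i * x j) - c * (γ i j * x i) + c * (γ i j * x j) :=
    fun i j => by ring
  simp_rw [expand, Finset.sum_add_distrib, Finset.sum_sub_distrib, ← Finset.mul_sum]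
  rw [hswap]
  ring

lemma card_offdiag {N : ℕ} (i : Fin N) :
    (((univ \ {i} : Finset (Fin N))).card : ℝ) = (N : ℝ) - 1 := by
  rw [Finset.card_sdiff_of_subset (Finset.subset_univ _), Finset.card_singleton, Finset.card_univ,
    Fintype.card_fin, Nat.cast_sub i.pos]
  simp

set_option maxHeartbeats 1000000 in
theorem stmt_9 (N : ℕ) (hN : 2 ≤ N) (E : ℕ) (hE : E = N.choose 2)
    (γ : Fin N → Fin N → ℝ) (hsym : ∀ i j, γ i j = γ j i) (Q P : ℝ)
    (hQ : (1 / (E : ℝ)) * ∑ i, ∑ j ∈ univ.filter (fun j => i < j), γ i j = Q)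
    (hQpos : 0 < Q)
    (hP : (1 / (E : ℝ)) * ∑ i, ∑ j ∈ univ.filter (fun j => i < j), (γ i j) ^ 2 = P)
    (hgap : (P - Q ^ 2) / Q ^ 2 < 1 / ((N : ℝ) - 1)) :
    (graphLaplacian N γ).PosSemidef ∧
    LinearMap.ker (Matrix.toLin' (graphLaplacian N γ)) =
      Submodule.span ℝ {fun _ => (1 : ℝ)} ∧
    0 < (N : ℝ) * (Q - Real.sqrt (((N : ℝ) - 1) * (P - Q ^ 2))) ∧
    ∀ x : Fin N → ℝ, ∑ i, x i = 0 →
      (N : ℝ) * (Q - Real.sqrt (((N : ℝ) - 1) * (P - Q ^ 2))) * (∑ i, (x i) ^ 2) ≤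
        dotProduct x ((graphLaplacian N γ).mulVec x) := by
  have hNR : (2 : ℝ) ≤ (N : ℝ) := by exact_mod_cast hN
  have hN1 : (0 : ℝ) < (N : ℝ) - 1 := by linarith
  have hNpos : (0 : ℝ) < (N : ℝ) := by linarith
  have hEpos : 0 < E := by rw [hE]; exact Nat.choose_pos hN
  have hERpos : (0 : ℝ) < (E : ℝ) := by exact_mod_cast hEpos
  have hEne : (E : ℝ) ≠ 0 := ne_of_gt hERpos
  have h2En : 2 * E = N * (N - 1) := by
    rw [hE, Nat.choose_two_right]
    refine Nat.mul_div_cancel' ?_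
    have h := Nat.even_mul_succ_self (N - 1)
    have hn : N - 1 + 1 = N := by omega
    rw [hn] at h
    rw [mul_comm]
    exact h.two_dvd
  have h2E : 2 * (E : ℝ) = (N : ℝ) * ((N : ℝ) - 1) := by
    have h1 : ((2 * E : ℕ) : ℝ) = ((N * (N - 1) : ℕ) : ℝ) := by exact congrArg (fun n : ℕ => (n : ℝ)) h2En
    push_cast [Nat.cast_sub (by omega : 1 ≤ N)] at h1
    linarith
  have hSQ : ∑ i, ∑ j ∈ univ.filter (fun j => i < j), γ i j = (E : ℝ) * Q := by
    field_simp at hQ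
    linarith
  have hSP : ∑ i, ∑ j ∈ univ.filter (fun j => i < j), (γ i j) ^ 2 = (E : ℝ) * P := by
    field_simp at hP
    linarith
  have hOQ : ∑ i, ∑ j ∈ univ \ {i}, γ i j = 2 * ((E : ℝ) * Q) := by
    rw [offdiag_two γ hsym, hSQ]
  have hOP : ∑ i, ∑ j ∈ univ \ {i}, γ i j ^ 2 = 2 * ((E : ℝ) * P) := by
    rw [offdiag_two (fun i j => γ i j ^ 2) (fun i j => by rw [hsym]), hSP]
  have hOcount : ∑ i : Fin N, ∑ _j ∈ univ \ {i}, (Q ^ 2) = (N : ℝ) * ((N : ℝ) - 1) * Q ^ 2 := by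
    have hc : ∀ i : Fin N, ∑ _j ∈ univ \ {i}, (Q ^ 2) = ((N : ℝ) - 1) * Q ^ 2 := by
      intro i
      rw [Finset.sum_const, nsmul_eq_mul, card_offdiag i]
    simp_rw [hc, Finset.sum_const, nsmul_eq_mul, Finset.card_univ, Fintype.card_fin]
    ring
  have hGval : ∑ i, ∑ j ∈ univ \ {i}, (γ i j - Q) ^ 2 = 2 * (E : ℝ) * (P - Q ^ 2) := by
    have expand : ∀ i j : Fin N, (γ i j - Q) ^ 2 = γ i j ^ 2 - 2 * Q * γ i j + Q ^ 2 :=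
      fun i j => by ring
    simp_rw [expand, Finset.sum_add_distrib, Finset.sum_sub_distrib, ← Finset.mul_sum]
    rw [hOP, hOQ, hOcount]
    linear_combination (-(Q ^ 2)) * h2E
  have hGnonneg : (0 : ℝ) ≤ ∑ i, ∑ j ∈ univ \ {i}, (γ i j - Q) ^ 2 := by positivity
  have hPQ : 0 ≤ P - Q ^ 2 := by
    have h : (0 : ℝ) ≤ 2 * (E : ℝ) * (P - Q ^ 2) := by rw [← hGval]; exact hGnonneg
    exact (mul_nonneg_iff_of_pos_left (by linarith : (0:ℝ) < 2 * (E : ℝ))).mp h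
  have hsqrt_lt : Real.sqrt (((N : ℝ) - 1) * (P - Q ^ 2)) < Q := by
    rw [Real.sqrt_lt' hQpos]
    rw [div_lt_div_iff₀ (by positivity) hN1] at hgap
    linarith
  have hlampos : 0 < (N : ℝ) * (Q - Real.sqrt (((N : ℝ) - 1) * (P - Q ^ 2))) :=
    mul_pos hNpos (by linarith)
  have hmain : ∀ x : Fin N → ℝ, ∑ i, x i = 0 →
      (N : ℝ) * (Q - Real.sqrt (((N : ℝ) - 1) * (P - Q ^ 2))) * (∑ i, (x i) ^ 2) ≤
        dotProduct x ((graphLaplacian N γ).mulVec x) := by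
    intro x hx
    rw [quadForm]
    have hsplit : ∑ i, ∑ j ∈ univ \ {i}, γ i j * (x i ^ 2 - x i * x j)
        = Q * ∑ i, ∑ j ∈ univ \ {i}, (x i ^ 2 - x i * x j)
          + ∑ i, ∑ j ∈ univ \ {i}, (γ i j - Q) * (x i ^ 2 - x i * x j) := by
      rw [Finset.mul_sum, ← Finset.sum_add_distrib]
      refine Finset.sum_congr rfl fun i _ => ?_
      rw [Finset.mul_sum, ← Finset.sum_add_distrib]
      exact Finset.sum_congr rfl fun j _ => by ring
    rw [hsplit, quad0, hx]
    have hM := quad_abs_le (graphLaplacian N (fun i j => γ i j - Q)) x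
    rw [quadForm (fun i j => γ i j - Q) x] at hM
    have hhs := hs_bound (fun i j => γ i j - Q)
    have hNG : (N : ℝ) * ∑ i, ∑ j ∈ univ \ {i}, (γ i j - Q) ^ 2
        = (N : ℝ) ^ 2 * (((N : ℝ) - 1) * (P - Q ^ 2)) := by
      rw [hGval]
      linear_combination (N : ℝ) * (P - Q ^ 2) * h2E
    have hsq : Real.sqrt (∑ i, ∑ j, ((graphLaplacian N (fun i j => γ i j - Q)) i j) ^ 2)
        ≤ (N : ℝ) * Real.sqrt (((N : ℝ) - 1) * (P - Q ^ 2)) := by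
      calc Real.sqrt (∑ i, ∑ j, ((graphLaplacian N (fun i j => γ i j - Q)) i j) ^ 2)
          ≤ Real.sqrt ((N : ℝ) * ∑ i, ∑ j ∈ univ \ {i}, (γ i j - Q) ^ 2) :=
            Real.sqrt_le_sqrt hhs
        _ = Real.sqrt ((N : ℝ) ^ 2 * (((N : ℝ) - 1) * (P - Q ^ 2))) := by rw [hNG]
        _ = (N : ℝ) * Real.sqrt (((N : ℝ) - 1) * (P - Q ^ 2)) := by
            rw [Real.sqrt_mul (sq_nonneg _), Real.sqrt_sq hNpos.le]
    have hsnn : (0 : ℝ) ≤ ∑ i, x i ^ 2 := by positivity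
    have hMlow : -((N : ℝ) * Real.sqrt (((N : ℝ) - 1) * (P - Q ^ 2)) * ∑ i, x i ^ 2)
        ≤ ∑ i, ∑ j ∈ univ \ {i}, (γ i j - Q) * (x i ^ 2 - x i * x j) := by
      have h1 := neg_abs_le (∑ i, ∑ j ∈ univ \ {i}, (γ i j - Q) * (x i ^ 2 - x i * x j))
      have h2 := mul_le_mul_of_nonneg_right hsq hsnn
      linarith
    nlinarith [hMlow]
  have hshift : ∀ x : Fin N → ℝ,
      dotProduct x ((graphLaplacian N γ).mulVec x)
        = dotProduct (fun i => x i - (∑ j, x j) / N)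
            ((graphLaplacian N γ).mulVec (fun i => x i - (∑ j, x j) / N)) := by
    intro x
    rw [quadForm, quadForm, shiftInv γ hsym x ((∑ j, x j) / N)]
  have hmeanzero : ∀ x : Fin N → ℝ, ∑ i, (x i - (∑ j, x j) / N) = 0 := by
    intro x
    rw [Finset.sum_sub_distrib, Finset.sum_const, Finset.card_univ, Fintype.card_fin,
      nsmul_eq_mul]
    field_simp
    ring
  have hpsdquad : ∀ x : Fin N → ℝ, 0 ≤ dotProduct x ((graphLaplacian N γ).mulVec x) := by
    intro x
    rw [hshift x]
    refine le_trans ?_ (hmain _ (hmeanzero x))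
    exact mul_nonneg hlampos.le (by positivity)
  have hherm : (graphLaplacian N γ).IsHermitian := by
    refine Matrix.ext fun i j => ?_
    rw [Matrix.conjTranspose_apply, star_trivial]
    by_cases h : i = j
    · subst h; rfl
    · show (if j = i then _ else -γ j i) = (if i = j then _ else -γ i j)
      rw [if_neg (fun hh => h hh.symm), if_neg h, hsym j i]
  have hone : (graphLaplacian N γ).mulVec (fun _ => (1 : ℝ)) = 0 := by
    funext i
    show ∑ j, (if i = j then ∑ k ∈ univ \ {i}, γ i k else -γ i j) * 1 = (0 : Fin N → ℝ) i
    rw [Finset.sum_eq_sum_sdiff_singleton_add (Finset.mem_univ i)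
      (fun j => (if i = j then ∑ k ∈ univ \ {i}, γ i k else -γ i j) * 1)]
    rw [if_pos rfl]
    have hoff : ∑ j ∈ univ \ {i}, (if i = j then ∑ k ∈ univ \ {i}, γ i k else -γ i j) * 1
        = -∑ j ∈ univ \ {i}, γ i j := by
      rw [← Finset.sum_neg_distrib]
      refine Finset.sum_congr rfl fun j hj => ?_
      simp only [Finset.mem_sdiff, Finset.mem_singleton] at hj
      rw [if_neg fun h => hj.2 h.symm]
      ring
    rw [hoff]
    simp
  refine ⟨Matrix.PosSemidef.of_dotProduct_mulVec_nonneg hherm fun x => ?_, ?_, hlampos, hmain⟩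
  · rw [show star x = x from funext fun i => star_trivial _]
    exact hpsdquad x
  · refine le_antisymm ?_ ?_
    · intro x hx
      rw [LinearMap.mem_ker, Matrix.toLin'_apply] at hx
      have hq0 : dotProduct x ((graphLaplacian N γ).mulVec x) = 0 := by
        rw [hx, dotProduct_zero]
      have hle := hmain _ (hmeanzero x)
      rw [← hshift x, hq0] at hle
      have hsnn : (0 : ℝ) ≤ ∑ i, (x i - (∑ j, x j) / N) ^ 2 := by positivity
      have hys : ∑ i, (x i - (∑ j, x j) / N) ^ 2 = 0 := by nlinarith [hlampos]
      have hyi : ∀ i, x i = (∑ j, x j) / N := by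
        intro i
        have h0 := (Finset.sum_eq_zero_iff_of_nonneg
          (fun j (_ : j ∈ univ) => sq_nonneg (x j - (∑ k, x k) / N))).mp hys i (Finset.mem_univ i)
        have := pow_eq_zero_iff (n := 2) (by norm_num) |>.mp h0
        linarith [this]
      rw [Submodule.mem_span_singleton]
      exact ⟨(∑ j, x j) / N, funext fun i => by simp [hyi i]⟩
    · rw [Submodule.span_le, Set.singleton_subset_iff]
      rw [SetLike.mem_coe, LinearMap.mem_ker, Matrix.toLin'_apply, hone]
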